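/- Let k be a field whose characteristic is 0 or a prime not dividing |G|. The ring of components R(G,ξ), defined as the monoid algebra k[Comp(G,ξ)] of the monoid of components over k, is a commutative k-algebra and is finitely generated as a k-algebra. -/

import Mathlib

open scoped Classical

/-- One Hurwitz braid move: replace adjacent entries `a, b` by `a*b*a⁻¹, a`. -/
inductive BraidMove (G : Type*) [Group G] : List G → List G → Prop
  | mk (l₁ l₂ : List G) (a b : G) :
      BraidMove G (l₁ ++ a :: b :: l₂) (l₁ ++ (a * b * a⁻¹) :: a :: l₂)

/-- Braid equivalence of tuples: the equivalence relation generated by Hurwitz moves. -/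
def BraidEquiv (G : Type*) [Group G] : List G → List G → Prop :=
  Relation.EqvGen (BraidMove G)

theorem BraidMove.append_right {G : Type*} [Group G] {l l' : List G} (m : List G)
    (h : BraidMove G l l') : BraidMove G (l ++ m) (l' ++ m) := by
  cases h with
  | mk l₁ l₂ a b =>
    simpa only [List.append_assoc, List.cons_append] using BraidMove.mk (G := G) l₁ (l₂ ++ m) a b

theorem BraidMove.append_left {G : Type*} [Group G] {l l' : List G} (m : List G)
    (h : BraidMove G l l') : BraidMove G (m ++ l) (m ++ l') := by
  cases h with
  | mk l₁ l₂ a b =>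
    simpa only [← List.append_assoc] using BraidMove.mk (G := G) (m ++ l₁) l₂ a b

theorem BraidEquiv.append_right {G : Type*} [Group G] {l l' : List G} (m : List G)
    (h : BraidEquiv G l l') : BraidEquiv G (l ++ m) (l' ++ m) := by
  induction h with
  | rel x y hxy => exact Relation.EqvGen.rel _ _ (hxy.append_right m)
  | refl x => exact Relation.EqvGen.refl _
  | symm x y _ ih => exact Relation.EqvGen.symm _ _ ih
  | trans x y z _ _ ih₁ ih₂ => exact Relation.EqvGen.trans _ _ _ ih₁ ih₂

theorem BraidEquiv.append_left {G : Type*} [Group G] {l l' : List G} (m : List G)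
    (h : BraidEquiv G l l') : BraidEquiv G (m ++ l) (m ++ l') := by
  induction h with
  | rel x y hxy => exact Relation.EqvGen.rel _ _ (hxy.append_left m)
  | refl x => exact Relation.EqvGen.refl _
  | symm x y _ ih => exact Relation.EqvGen.symm _ _ ih
  | trans x y z _ _ ih₁ ih₂ => exact Relation.EqvGen.trans _ _ _ ih₁ ih₂

theorem BraidEquiv.append {G : Type*} [Group G] {a b c d : List G}
    (h₁ : BraidEquiv G a b) (h₂ : BraidEquiv G c d) : BraidEquiv G (a ++ c) (b ++ d) :=
  Relation.EqvGen.trans _ _ _ (h₁.append_right c) (h₂.append_left b)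

/-- The setoid of braid equivalence on tuples of elements of `G`. -/
def braidSetoid (G : Type*) [Group G] : Setoid (List G) :=
  Relation.EqvGen.setoid (BraidMove G)

/-- Braid-equivalence classes of tuples of elements of `G`. -/
def HurwitzCl (G : Type*) [Group G] : Type _ :=
  Quotient (braidSetoid G)

/-- Concatenation endows the set of braid-equivalence classes with a monoid structure,
the class of the empty tuple being the identity. -/
instance (G : Type*) [Group G] : Monoid (HurwitzCl G) where
  mul := Quotient.map₂ (· ++ ·) fun _ _ h₁ _ _ h₂ => BraidEquiv.append h₁ h₂
  one := Quotient.mk (braidSetoid G) []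
  mul_assoc a b c := by
    refine Quotient.inductionOn₃ a b c fun a b c => ?_
    exact congrArg (Quotient.mk _) (List.append_assoc a b c)
  one_mul a := by
    refine Quotient.inductionOn a fun a => ?_
    rfl
  mul_one a := by
    refine Quotient.inductionOn a fun a => ?_
    exact congrArg (Quotient.mk _) (List.append_nil a)

/-- The braid-equivalence class of a tuple. -/
def HurwitzCl.mk {G : Type*} [Group G] (l : List G) : HurwitzCl G :=
  Quotient.mk (braidSetoid G) l

theorem HurwitzCl.mk_mul {G : Type*} [Group G] (l l' : List G) :
    HurwitzCl.mk l * HurwitzCl.mk l' = HurwitzCl.mk (l ++ l') := rfl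

/-- The total weight `|ξ| = ∑_{c ∈ D} ξ(c)`. -/
def totalXi {G : Type*} [Group G] (D : Finset (ConjClasses G)) (ξ : ConjClasses G → ℕ) : ℕ :=
  ∑ c ∈ D, ξ c

/-- `l` is a tuple representing a component of degree `n`: it has product `1`,
length `n·|ξ|`, and exactly `n·ξ(c)` entries in the class `c`, for each `c ∈ D`. -/
def IsComponentList {G : Type*} [Group G] (D : Finset (ConjClasses G))
    (ξ : ConjClasses G → ℕ) (n : ℕ) (l : List G) : Prop :=
  l.prod = 1 ∧ l.length = n * totalXi D ξ ∧
    ∀ c ∈ D, l.countP (fun x => decide (ConjClasses.mk x = c)) = n * ξ c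

/-- The monoid of components `Comp(G,ξ)`, as a submonoid of the monoid of
braid-equivalence classes of tuples under concatenation. -/
def Comp {G : Type*} [Group G] (D : Finset (ConjClasses G)) (ξ : ConjClasses G → ℕ) :
    Submonoid (HurwitzCl G) where
  carrier := {x | ∃ n l, x = HurwitzCl.mk l ∧ IsComponentList D ξ n l}
  one_mem' := ⟨0, [], rfl, by simp [IsComponentList]⟩
  mul_mem' := by
    rintro x y ⟨n, l, rfl, hl1, hl2, hl3⟩ ⟨n', l', rfl, hl1', hl2', hl3'⟩
    refine ⟨n + n', l ++ l', rfl, ?_, ?_, ?_⟩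
    · simp [List.prod_append, hl1, hl1']
    · simp [hl2, hl2', add_mul]
    · intro c hc
      simp [List.countP_append, hl3 c hc, hl3' c hc, add_mul]

section BraidAux

variable {G : Type*} [Group G]

theorem BraidMove.prod_eq {l l' : List G} (h : BraidMove G l l') : l'.prod = l.prod := by
  cases h with
  | mk l₁ l₂ a b =>
    simp only [List.prod_append, List.prod_cons]
    group

theorem BraidEquiv.prod_eq {l l' : List G} (h : BraidEquiv G l l') : l'.prod = l.prod := by
  induction h with
  | rel x y hxy => exact hxy.prod_eq
  | refl x => rfl
  | symm x y _ ih => exact ih.symm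
  | trans x y z _ _ ih₁ ih₂ => exact ih₂.trans ih₁

theorem BraidMove.countP_eq {l l' : List G} (h : BraidMove G l l') (p : G → Bool)
    (hp : ∀ a b : G, p (a * b * a⁻¹) = p b) : l'.countP p = l.countP p := by
  cases h with
  | mk l₁ l₂ a b =>
    simp only [List.countP_append, List.countP_cons, hp]
    omega

theorem BraidEquiv.countP_eq {l l' : List G} (h : BraidEquiv G l l') (p : G → Bool)
    (hp : ∀ a b : G, p (a * b * a⁻¹) = p b) : l'.countP p = l.countP p := by
  induction h with
  | rel x y hxy => exact hxy.countP_eq p hp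
  | refl x => rfl
  | symm x y _ ih => exact ih.symm
  | trans x y z _ _ ih₁ ih₂ => exact ih₂.trans ih₁

theorem BraidMove.length_eq {l l' : List G} (h : BraidMove G l l') : l'.length = l.length := by
  cases h with
  | mk l₁ l₂ a b => simp

theorem BraidEquiv.length_eq {l l' : List G} (h : BraidEquiv G l l') : l'.length = l.length := by
  induction h with
  | rel x y hxy => exact hxy.length_eq
  | refl x => rfl
  | symm x y _ ih => exact ih.symm
  | trans x y z _ _ ih₁ ih₂ => exact ih₂.trans ih₁

theorem mk_conj_eq (a b : G) : ConjClasses.mk (a * b * a⁻¹) = ConjClasses.mk b :=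
  (ConjClasses.mk_eq_mk_iff_isConj.2 (isConj_iff.2 ⟨a, rfl⟩)).symm

theorem BraidEquiv.classCount_eq {l l' : List G} (h : BraidEquiv G l l') (c : ConjClasses G) :
    l'.countP (fun x => decide (ConjClasses.mk x = c)) =
      l.countP (fun x => decide (ConjClasses.mk x = c)) :=
  h.countP_eq _ (fun a b => by simp [mk_conj_eq])

theorem braid_snoc (l : List G) (x : G) :
    BraidEquiv G (l ++ [x]) ((l.prod * x * l.prod⁻¹) :: l) := by
  induction l with
  | nil => simpa [BraidEquiv] using Relation.EqvGen.refl (r := BraidMove G) [x]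
  | cons a t ih =>
    have h1 : BraidEquiv G (a :: (t ++ [x])) (a :: ((t.prod * x * t.prod⁻¹) :: t)) :=
      ih.append_left [a]
    have h2 : BraidEquiv G (a :: ((t.prod * x * t.prod⁻¹) :: t))
        ((a * (t.prod * x * t.prod⁻¹) * a⁻¹) :: a :: t) :=
      Relation.EqvGen.rel _ _ (by simpa using BraidMove.mk (G := G) [] t a (t.prod * x * t.prod⁻¹))
    have h3 : (a * (t.prod * x * t.prod⁻¹) * a⁻¹) =
        (a :: t).prod * x * ((a :: t).prod)⁻¹ := by
      simp [List.prod_cons, mul_assoc]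
    rw [h3] at h2
    exact Relation.EqvGen.trans _ _ _ h1 h2

theorem braid_comm_of_prod_one {l : List G} (h : l.prod = 1) :
    ∀ l' : List G, BraidEquiv G (l ++ l') (l' ++ l) := by
  intro l'
  induction l' with
  | nil => simpa [BraidEquiv] using Relation.EqvGen.refl (r := BraidMove G) l
  | cons x s ih =>
    have h1 : BraidEquiv G ((l ++ [x]) ++ s) ((x :: l) ++ s) := by
      have := (braid_snoc l x).append_right s
      rwa [h, one_mul, inv_one, mul_one] at this
    have h2 : BraidEquiv G (x :: (l ++ s)) (x :: (s ++ l)) := ih.append_left [x]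
    have h3 : BraidEquiv G (l ++ x :: s) (x :: (l ++ s)) := by
      simpa using h1
    exact Relation.EqvGen.trans _ _ _ h3 h2

end BraidAux
set_option linter.unusedSectionVars false

section PullAux

variable {G : Type*} [Group G]

/-- count of a single element. -/
noncomputable def cnt (g : G) (l : List G) : ℕ := l.countP (fun x => decide (x = g))

/-- count of a conjugacy class (with the same `Decidable` instance as `IsComponentList`). -/
noncomputable def ccnt (c : ConjClasses G) (l : List G) : ℕ :=
  l.countP (fun x => decide (ConjClasses.mk x = c))

theorem ccnt_eq_countP (c : ConjClasses G) (l : List G) :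
    ccnt c l = l.countP (fun x => decide (ConjClasses.mk x = c)) := rfl

theorem ccnt_append (c : ConjClasses G) (l₁ l₂ : List G) :
    ccnt c (l₁ ++ l₂) = ccnt c l₁ + ccnt c l₂ := List.countP_append

theorem ccnt_cons (c : ConjClasses G) (a : G) (l : List G) :
    ccnt c (a :: l) = ccnt c l + (if ConjClasses.mk a = c then 1 else 0) := by
  simp only [ccnt, List.countP_cons]
  by_cases h : ConjClasses.mk a = c <;> simp [h]

theorem BraidEquiv.ccnt_eq {l l' : List G} (h : BraidEquiv G l l') (c : ConjClasses G) :
    ccnt c l' = ccnt c l :=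
  h.countP_eq _ (fun a b => by simp [mk_conj_eq])

theorem cnt_nil (g : G) : cnt g ([] : List G) = 0 := rfl

theorem ccnt_nil (c : ConjClasses G) : ccnt c ([] : List G) = 0 := rfl

theorem cnt_cons (g a : G) (l : List G) :
    cnt g (a :: l) = cnt g l + if a = g then 1 else 0 := by
  simp only [cnt, List.countP_cons]
  by_cases h : a = g <;> simp [h]

theorem pull_one {g : G} : ∀ {l : List G}, g ∈ l →
    ∃ r, BraidEquiv G l (g :: r) ∧ cnt g r + 1 = cnt g l := by
  intro l hl
  induction l with
  | nil => simp at hl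
  | cons a t ih =>
    by_cases hag : a = g
    · subst hag
      exact ⟨t, Relation.EqvGen.refl _, by simp [cnt_cons]⟩
    · have hgt : g ∈ t := by
        rcases List.mem_cons.mp hl with h | h
        · exact absurd h.symm hag
        · exact h
      obtain ⟨r, hbr, hcnt⟩ := ih hgt
      refine ⟨(g⁻¹ * a * g) :: r, ?_, ?_⟩
      · have h1 : BraidEquiv G (a :: t) (a :: g :: r) := hbr.append_left [a]
        have h2 : BraidEquiv G (g :: (g⁻¹ * a * g) :: r) (a :: g :: r) :=
          Relation.EqvGen.rel _ _ (by
            simpa [mul_assoc] using BraidMove.mk (G := G) [] r g (g⁻¹ * a * g))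
        exact Relation.EqvGen.trans _ _ _ h1 (Relation.EqvGen.symm _ _ h2)
      · have hne : ¬ (g⁻¹ * a * g = g) := by
          intro h
          apply hag
          have : a * g = g * g := by
            have := congrArg (fun x => g * x) h
            simpa [mul_assoc] using this
          exact mul_right_cancel this
        rw [cnt_cons, if_neg hne, cnt_cons, if_neg hag] at *
        omega

theorem pull_many (g : G) : ∀ (t : ℕ) (l : List G), t ≤ cnt g l →
    ∃ r, BraidEquiv G l (List.replicate t g ++ r) := by
  intro t
  induction t with
  | zero => intro l _; exact ⟨l, Relation.EqvGen.refl _⟩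
  | succ t ih =>
    intro l hle
    have hmem : g ∈ l := by
      have : 0 < l.countP (fun x => decide (x = g)) := by
        have : 0 < cnt g l := by omega
        simpa [cnt] using this
      obtain ⟨a, ha, hpa⟩ := List.countP_pos_iff.mp this
      simp only [decide_eq_true_eq] at hpa
      rwa [hpa] at ha
    obtain ⟨r, hbr, hcnt⟩ := pull_one hmem
    obtain ⟨r', hbr'⟩ := ih r (by omega)
    have h2 : BraidEquiv G (g :: r) (g :: (List.replicate t g ++ r')) := hbr'.append_left [g]
    refine ⟨r', Relation.EqvGen.trans _ _ _ hbr ?_⟩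
    simpa [List.replicate_succ, BraidEquiv] using h2

theorem ccnt_replicate (g : G) (t : ℕ) (c : ConjClasses G) :
    ccnt c (List.replicate t g) = if ConjClasses.mk g = c then t else 0 := by
  induction t with
  | zero => by_cases h : ConjClasses.mk g = c <;> simp [ccnt_nil, h]
  | succ t ih =>
    rw [List.replicate_succ, ccnt_cons, ih]
    by_cases h : ConjClasses.mk g = c <;> simp [h]

end PullAux

section Pigeonhole

variable {G : Type*} [Group G] [Fintype G]

set_option maxHeartbeats 1000000 in
theorem ccnt_eq_sum (c : ConjClasses G) (l : List G) :
    ccnt c l = ∑ g : G, if ConjClasses.mk g = c then cnt g l else 0 := by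
  induction l with
  | nil =>
    rw [ccnt_nil]
    symm
    refine Finset.sum_eq_zero fun g _ => ?_
    rw [cnt_nil, ite_self]
  | cons a t ih =>
    rw [ccnt_cons, ih]
    have key : ∀ g : G, (if ConjClasses.mk g = c then cnt g (a :: t) else 0) =
        (if ConjClasses.mk g = c then cnt g t else 0) +
          (if a = g then (if ConjClasses.mk g = c then 1 else 0) else 0) := by
      intro g
      rw [cnt_cons]
      split_ifs <;> omega
    rw [Finset.sum_congr rfl (fun g _ => key g), Finset.sum_add_distrib,
      Finset.sum_ite_eq Finset.univ a (fun g => if ConjClasses.mk g = c then 1 else 0),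
      if_pos (Finset.mem_univ a)]
    congr 1
    by_cases h : ConjClasses.mk a = c <;> simp [h]

theorem class_pigeonhole (c : ConjClasses G) (l : List G) (t : ℕ) (ht : 1 ≤ t)
    (h : Fintype.card G * t ≤ ccnt c l) :
    ∃ g : G, ConjClasses.mk g = c ∧ t ≤ cnt g l := by
  obtain ⟨g₀, -, hg₀⟩ := Finset.exists_max_image Finset.univ
    (fun g : G => if ConjClasses.mk g = c then cnt g l else 0) Finset.univ_nonempty
  have hle : ccnt c l ≤
      Fintype.card G * (if ConjClasses.mk g₀ = c then cnt g₀ l else 0) := by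
    rw [ccnt_eq_sum]
    calc ∑ g : G, (if ConjClasses.mk g = c then cnt g l else 0)
        ≤ ∑ _g : G, (if ConjClasses.mk g₀ = c then cnt g₀ l else 0) :=
          Finset.sum_le_sum (fun g _ => hg₀ g (Finset.mem_univ g))
      _ = Fintype.card G * (if ConjClasses.mk g₀ = c then cnt g₀ l else 0) := by
          simp [Finset.sum_const, mul_comm]
  have hcard : 0 < Fintype.card G := Fintype.card_pos
  have ht0 : t ≤ (if ConjClasses.mk g₀ = c then cnt g₀ l else 0) :=
    Nat.le_of_mul_le_mul_left (le_trans h hle) hcard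
  by_cases hg : ConjClasses.mk g₀ = c
  · exact ⟨g₀, hg, by rwa [if_pos hg] at ht0⟩
  · rw [if_neg hg] at ht0; omega

end Pigeonhole
section Iter

variable {G : Type*} [Group G] [Fintype G]

theorem iter_blocks (ξ : ConjClasses G → ℕ) (E : Finset (ConjClasses G)) :
    ∀ r : List G, (∀ c ∈ E, 1 ≤ ξ c) →
    (∀ c ∈ E, Fintype.card G * (Fintype.card G * ξ c) ≤ ccnt c r) →
    ∃ P r', BraidEquiv G r (P ++ r') ∧ P.prod = 1 ∧
      P.length = ∑ c ∈ E, Fintype.card G * ξ c ∧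
      (∀ c, ccnt c P = if c ∈ E then Fintype.card G * ξ c else 0) := by
  classical
  induction E using Finset.induction_on with
  | empty =>
    intro r _ _
    exact ⟨[], r, Relation.EqvGen.refl _, by simp, by simp,
      fun c => by simp [ccnt_nil]⟩
  | @insert c₀ E hc₀ ih =>
    intro r hξ hcnt
    set t := Fintype.card G * ξ c₀ with ht
    have ht1 : 1 ≤ t := by
      have h1 := hξ c₀ (Finset.mem_insert_self c₀ E)
      have h2 : 0 < Fintype.card G := Fintype.card_pos
      rw [ht]
      exact Nat.one_le_iff_ne_zero.mpr (Nat.mul_ne_zero (by omega) (by omega))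
    obtain ⟨g, hg, hgc⟩ := class_pigeonhole c₀ r t ht1
      (hcnt c₀ (Finset.mem_insert_self c₀ E))
    obtain ⟨r₁, hbr₁⟩ := pull_many g t r hgc
    have hcnt₁ : ∀ c ∈ E, Fintype.card G * (Fintype.card G * ξ c) ≤ ccnt c r₁ := by
      intro c hc
      have hne : ConjClasses.mk g ≠ c := by
        rw [hg]; rintro rfl; exact hc₀ hc
      have hinv := hbr₁.ccnt_eq c
      rw [ccnt_append, ccnt_replicate, if_neg hne] at hinv
      have := hcnt c (Finset.mem_insert_of_mem hc)
      omega
    obtain ⟨P', r'', hbr₂, hP'prod, hP'len, hP'cnt⟩ :=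
      ih r₁ (fun c hc => hξ c (Finset.mem_insert_of_mem hc)) hcnt₁
    refine ⟨List.replicate t g ++ P', r'', ?_, ?_, ?_, ?_⟩
    · have h2 : BraidEquiv G (List.replicate t g ++ r₁)
          (List.replicate t g ++ (P' ++ r'')) := hbr₂.append_left _
      have := Relation.EqvGen.trans _ _ _ hbr₁ h2
      simpa [List.append_assoc, BraidEquiv] using this
    · rw [List.prod_append, List.prod_replicate, hP'prod, mul_one, ht, pow_mul,
        pow_card_eq_one, one_pow]
    · rw [List.length_append, List.length_replicate, hP'len, Finset.sum_insert hc₀]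
    · intro c
      rw [ccnt_append, ccnt_replicate, hP'cnt c, hg]
      by_cases h1 : c₀ = c
      · subst h1
        rw [if_pos rfl, if_neg hc₀, if_pos (Finset.mem_insert_self c₀ E), Nat.add_zero]
      · rw [if_neg h1]
        by_cases h2 : c ∈ E
        · rw [if_pos h2, if_pos (Finset.mem_insert_of_mem h2), Nat.zero_add]
        · rw [if_neg h2, if_neg (by
            rw [Finset.mem_insert]
            push_neg
            exact ⟨fun h => h1 h.symm, h2⟩), Nat.add_zero]

theorem split_big (D : Finset (ConjClasses G)) (ξ : ConjClasses G → ℕ)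
    (hξ : ∀ c ∈ D, 1 ≤ ξ c) {n : ℕ} {l : List G}
    (hn : Fintype.card G * Fintype.card G ≤ n)
    (h : IsComponentList D ξ n l) :
    ∃ P r, BraidEquiv G l (P ++ r) ∧ IsComponentList D ξ (Fintype.card G) P ∧
      IsComponentList D ξ (n - Fintype.card G) r := by
  obtain ⟨hprod, hlen, hcnt⟩ := h
  simp only [← ccnt_eq_countP] at hcnt
  have hcard : 0 < Fintype.card G := Fintype.card_pos
  have hcn : Fintype.card G ≤ n :=
    le_trans (Nat.le_mul_of_pos_left _ hcard) hn
  obtain ⟨P, r, hbr, hPprod, hPlen, hPcnt⟩ := iter_blocks ξ D l hξ (by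
    intro c hc
    rw [hcnt c hc]
    calc Fintype.card G * (Fintype.card G * ξ c)
        = Fintype.card G * Fintype.card G * ξ c := (Nat.mul_assoc _ _ _).symm
      _ ≤ n * ξ c := Nat.mul_le_mul_right _ hn)
  have hPlen' : P.length = Fintype.card G * totalXi D ξ := by
    rw [hPlen, totalXi, Finset.mul_sum]
  have hlen' := hbr.length_eq
  rw [List.length_append] at hlen'
  have hprod' := hbr.prod_eq
  rw [List.prod_append, hPprod, one_mul] at hprod'
  refine ⟨P, r, hbr, ⟨hPprod, hPlen', fun c hc => by
      rw [← ccnt_eq_countP, hPcnt c, if_pos hc]⟩,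
    ⟨hprod'.trans hprod, ?_, ?_⟩⟩
  · have h1 : Fintype.card G * totalXi D ξ ≤ n * totalXi D ξ :=
      Nat.mul_le_mul_right _ hcn
    rw [Nat.sub_mul]
    omega
  · intro c hc
    rw [← ccnt_eq_countP]
    have hinv := hbr.ccnt_eq c
    rw [ccnt_append, hPcnt c, if_pos hc, hcnt c hc] at hinv
    have h1 : Fintype.card G * ξ c ≤ n * ξ c := Nat.mul_le_mul_right _ hcn
    rw [Nat.sub_mul]
    omega

end Iter
section FG

theorem comp_mul_comm {G : Type*} [Group G] (D : Finset (ConjClasses G))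
    (ξ : ConjClasses G → ℕ) (x y : ↥(Comp D ξ)) : x * y = y * x := by
  have hx2 : ∃ n l, (x : HurwitzCl G) = HurwitzCl.mk l ∧ IsComponentList D ξ n l := x.2
  have hy2 : ∃ n l, (y : HurwitzCl G) = HurwitzCl.mk l ∧ IsComponentList D ξ n l := y.2
  obtain ⟨n, l, hxl, hl1, -, -⟩ := hx2
  obtain ⟨m, l', hyl, -, -, -⟩ := hy2
  apply Subtype.ext
  show (x : HurwitzCl G) * (y : HurwitzCl G) = (y : HurwitzCl G) * (x : HurwitzCl G)
  rw [hxl, hyl, HurwitzCl.mk_mul, HurwitzCl.mk_mul]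
  exact Quotient.sound (braid_comm_of_prod_one hl1 l')

theorem comp_fg {G : Type*} [Group G] [Fintype G] (D : Finset (ConjClasses G))
    (ξ : ConjClasses G → ℕ) (hξ : ∀ c ∈ D, 1 ≤ ξ c) : Monoid.FG ↥(Comp D ξ) := by
  classical
  set B := Fintype.card G * Fintype.card G with hB
  set S : Set ↥(Comp D ξ) :=
    {x | ∃ n l, n ≤ B ∧ (x : HurwitzCl G) = HurwitzCl.mk l ∧ IsComponentList D ξ n l} with hS
  have hfin : S.Finite := by
    have hT : (HurwitzCl.mk (G := G) ''
        {l : List G | l.length ≤ B * totalXi D ξ}).Finite :=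
      (List.finite_length_le G (B * totalXi D ξ)).image _
    have hsub : S ⊆ Subtype.val ⁻¹'
        (HurwitzCl.mk (G := G) '' {l : List G | l.length ≤ B * totalXi D ξ}) := by
      rintro x ⟨n, l, hn, hx, -, hlen, -⟩
      exact ⟨l, by simpa [hlen] using Nat.mul_le_mul_right (totalXi D ξ) hn, hx.symm⟩
    exact ((hT.preimage Subtype.val_injective.injOn)).subset hsub
  refine Monoid.fg_iff.mpr ⟨S, ?_, hfin⟩
  rw [eq_top_iff]
  rintro x -
  have hx2 : ∃ n l, (x : HurwitzCl G) = HurwitzCl.mk l ∧ IsComponentList D ξ n l := x.2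
  obtain ⟨n, l, hx, hl⟩ := hx2
  have hcard : 0 < Fintype.card G := Fintype.card_pos
  have key : ∀ n : ℕ, ∀ l : List G, IsComponentList D ξ n l →
      ∀ hm : HurwitzCl.mk l ∈ Comp D ξ,
      (⟨HurwitzCl.mk l, hm⟩ : ↥(Comp D ξ)) ∈ Submonoid.closure S := by
    intro n
    induction n using Nat.strong_induction_on with
    | _ n IH =>
      intro l hl hm
      by_cases hn : n ≤ B
      · exact Submonoid.subset_closure ⟨n, l, hn, rfl, hl⟩
      · push_neg at hn
        have hBn : Fintype.card G * Fintype.card G ≤ n := le_of_lt (hB ▸ hn)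
        obtain ⟨P, r, hbr, hP, hr⟩ := split_big D ξ hξ hBn hl
        have hPm : HurwitzCl.mk P ∈ Comp D ξ := ⟨_, P, rfl, hP⟩
        have hrm : HurwitzCl.mk r ∈ Comp D ξ := ⟨_, r, rfl, hr⟩
        have hxy : (⟨HurwitzCl.mk l, hm⟩ : ↥(Comp D ξ)) =
            ⟨HurwitzCl.mk P, hPm⟩ * ⟨HurwitzCl.mk r, hrm⟩ := by
          apply Subtype.ext
          show HurwitzCl.mk l = HurwitzCl.mk P * HurwitzCl.mk r
          rw [HurwitzCl.mk_mul]
          exact Quotient.sound hbr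
        rw [hxy]
        have h1 : Fintype.card G < n :=
          lt_of_le_of_lt (Nat.le_mul_of_pos_left _ hcard) hn
        have h2 : n - Fintype.card G < n := Nat.sub_lt (by omega) hcard
        exact mul_mem (IH (Fintype.card G) h1 P hP hPm)
          (IH (n - Fintype.card G) h2 r hr hrm)
  have hx' : x = ⟨HurwitzCl.mk l, hx ▸ x.2⟩ := Subtype.ext hx
  rw [hx']
  exact key n l hl _

end FG
/-- the ring of components `R(G,ξ) = k[Comp(G,ξ)]` is a commutative
`k`-algebra which is finitely generated as a `k`-algebra. -/
theorem ringOfComponents_commutative_and_finiteType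
    (G : Type*) [Group G] [Fintype G] [Nontrivial G]
    (k : Type*) [Field k]
    (hchar : CharZero k ∨ ∃ p : ℕ, p.Prime ∧ CharP k p ∧ ¬ p ∣ Fintype.card G)
    (D : Finset (ConjClasses G))
    (hD : ∀ c ∈ D, (1 : G) ∉ ConjClasses.carrier c)
    (hDgen : Subgroup.closure {g : G | ConjClasses.mk g ∈ D} = ⊤)
    (ξ : ConjClasses G → ℕ) (hξ : ∀ c ∈ D, 1 ≤ ξ c) :
    (∀ x y : MonoidAlgebra k ↥(Comp D ξ), x * y = y * x) ∧
      Algebra.FiniteType k (MonoidAlgebra k ↥(Comp D ξ)) := by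
  letI : CommMonoid ↥(Comp D ξ) :=
    { (inferInstance : Monoid ↥(Comp D ξ)) with mul_comm := comp_mul_comm D ξ }
  haveI : Monoid.FG ↥(Comp D ξ) := comp_fg D ξ hξ
  exact ⟨fun x y => mul_comm x y, inferInstance⟩
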